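/- Fix integers n, m with n > N/2 and m > N/2 + 1, and suppose J ≥ 2n. Then for every ψ ∈ H^J(ℝ^N) with ⟨x⟩^m D^β ψ ∈ L^∞ for |β| ≤ 2n, and with v(t) = e^{itΔ}ψ, there is a constant C independent of ψ and t ≥ 0 such that Σ_{k=0}^{2n} sup_{|β|=k} ‖⟨x⟩^m D^β v‖_{L^∞((0,t)×ℝ^N)} ≤ C(1+t)^n Σ_{k=0}^{2n} sup_{|β|=k} ‖⟨x⟩^m D^β ψ‖_{L^∞} + C t (1+t)^n sup_{|β|=2n+2} ‖⟨x⟩^m D^β v‖_{L^∞((0,t)×ℝ^N)}. -/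

import Mathlib

open MeasureTheory Complex
open scoped BigOperators ENNReal NNReal SchwartzMap

noncomputable def jb {N : ℕ} (x : EuclideanSpace ℝ (Fin N)) : ℝ :=
  Real.sqrt (1 + ‖x‖ ^ 2)

noncomputable def Dk {N : ℕ} {F : Type*} [NormedAddCommGroup F] [NormedSpace ℝ F]
    (k : ℕ) (f : EuclideanSpace ℝ (Fin N) → F) (d : Fin k → Fin N)
    (x : EuclideanSpace ℝ (Fin N)) : F :=
  iteratedFDeriv ℝ k f x (fun i => EuclideanSpace.single (d i) 1)

noncomputable def lap {N : ℕ} {F : Type*} [NormedAddCommGroup F] [NormedSpace ℝ F]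
    (f : EuclideanSpace ℝ (Fin N) → F) (x : EuclideanSpace ℝ (Fin N)) : F :=
  ∑ i : Fin N, iteratedFDeriv ℝ 2 f x (fun _ => EuclideanSpace.single i 1)

noncomputable def gradNorm {N : ℕ} (f : EuclideanSpace ℝ (Fin N) → ℂ)
    (x : EuclideanSpace ℝ (Fin N)) : ℝ :=
  Real.sqrt (∑ i : Fin N, ‖fderiv ℝ f x (EuclideanSpace.single i 1)‖ ^ 2)

namespace Stmt10Aux
variable {N : ℕ}
local notation "E" => EuclideanSpace ℝ (Fin N)

noncomputable def ee (i : Fin N) : EuclideanSpace ℝ (Fin N) := EuclideanSpace.single i 1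
lemma norm_ee (i : Fin N) : ‖ee i‖ = 1 := by simp [ee, EuclideanSpace.norm_single]
noncomputable def pd (j : Fin N) (f : E → ℂ) : E → ℂ := fun y => fderiv ℝ f y (ee j)
lemma Dk_eq (k : ℕ) (f : E → ℂ) (d : Fin k → Fin N) (x : E) :
    Dk k f d x = iteratedFDeriv ℝ k f x (fun i => ee (d i)) := rfl
lemma Dk_zero (f : E → ℂ) (d : Fin 0 → Fin N) (x : E) : Dk 0 f d x = f x := by
  simp [Dk_eq, iteratedFDeriv_zero_apply]
lemma smooth_iteratedFDeriv {f : E → ℂ} (hf : ContDiff ℝ (⊤:ℕ∞) f) (k : ℕ) :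
    ContDiff ℝ (⊤:ℕ∞) (iteratedFDeriv ℝ k f) :=
  hf.iteratedFDeriv_right (mod_cast le_top)
lemma smooth_Dk {f : E → ℂ} (hf : ContDiff ℝ (⊤:ℕ∞) f) (k : ℕ) (d : Fin k → Fin N) :
    ContDiff ℝ (⊤:ℕ∞) (fun y => Dk k f d y) :=
  (ContinuousMultilinearMap.apply ℝ (fun _ : Fin k => EuclideanSpace ℝ (Fin N)) ℂ
    (fun i => ee (d i))).contDiff.comp (smooth_iteratedFDeriv hf k)
lemma smooth_pd {f : E → ℂ} (hf : ContDiff ℝ (⊤:ℕ∞) f) (j : Fin N) :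
    ContDiff ℝ (⊤:ℕ∞) (pd j f) :=
  ((ContinuousLinearMap.apply ℝ ℂ (ee j)).contDiff.comp
    (hf.fderiv_right (m := (⊤:ℕ∞)) (mod_cast le_top)))
lemma Dk_succ_left {f : E → ℂ} (hf : ContDiff ℝ (⊤:ℕ∞) f) (k : ℕ)
    (d : Fin (k+1) → Fin N) (x : E) :
    Dk (k+1) f d x = fderiv ℝ (fun y => Dk k f (Fin.tail d) y) x (ee (d 0)) := by
  have hd : DifferentiableAt ℝ (iteratedFDeriv ℝ k f) x :=
    ((smooth_iteratedFDeriv hf k).differentiable (by simp)).differentiableAt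
  rw [Dk_eq, iteratedFDeriv_succ_apply_left]
  have := fderiv_continuousMultilinear_apply_const_apply hd
    (fun i => ee (Fin.tail d i)) (ee (d 0))
  rw [show (fun y => Dk k f (Fin.tail d) y) = (fun y => iteratedFDeriv ℝ k f y
    (fun i => ee (Fin.tail d i))) from rfl, this]
  rfl
lemma Dk_succ_right {f : E → ℂ} (hf : ContDiff ℝ (⊤:ℕ∞) f) (k : ℕ)
    (d : Fin k → Fin N) (j : Fin N) (x : E) :
    Dk k (pd j f) d x = Dk (k+1) f (Fin.snoc d j) x := by
  have hcomp : pd j f = (ContinuousLinearMap.apply ℝ ℂ (ee j)) ∘ (fderiv ℝ f) := rfl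
  have h1 : iteratedFDeriv ℝ k (pd j f) x =
      (ContinuousLinearMap.apply ℝ ℂ (ee j)).compContinuousMultilinearMap
        (iteratedFDeriv ℝ k (fderiv ℝ f) x) := by
    rw [hcomp]
    exact ContinuousLinearMap.iteratedFDeriv_comp_left _
      (hf.fderiv_right (m := (⊤:ℕ∞)) (mod_cast le_top)).contDiffAt (mod_cast le_top)
  rw [Dk_eq, h1, Dk_eq, iteratedFDeriv_succ_apply_right]
  simp only [ContinuousLinearMap.compContinuousMultilinearMap_coe, Function.comp_apply,
    ContinuousLinearMap.apply_apply]
  congr 1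
  · congr 1
    funext i
    simp [Fin.init, Fin.snoc_castSucc]
  · simp [Fin.snoc_last]

-- chunk 2
lemma fderiv_eval_clm {g : E → (EuclideanSpace ℝ (Fin N) →L[ℝ] ℂ)} {x : E}
    (hg : DifferentiableAt ℝ g x) (v w : E) :
    fderiv ℝ (fun y => g y v) x w = fderiv ℝ g x w v := by
  have h := ((ContinuousLinearMap.apply ℝ ℂ v).hasFDerivAt.comp x hg.hasFDerivAt).fderiv
  rw [show (fun y => g y v) = ((ContinuousLinearMap.apply ℝ ℂ v) ∘ g) from rfl, h]
  rfl

lemma pd_symm {f : E → ℂ} (hf : ContDiff ℝ (⊤:ℕ∞) f) (i j : Fin N) (x : E) :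
    pd i (pd j f) x = pd j (pd i f) x := by
  have hdf : ∀ y, HasFDerivAt f (fderiv ℝ f y) y := fun y =>
    ((hf.differentiable (by simp)) y).hasFDerivAt
  have hd2 : DifferentiableAt ℝ (fderiv ℝ f) x :=
    (((hf.fderiv_right (m := (⊤:ℕ∞)) (mod_cast le_top)).differentiable
      (by simp)) x)
  have hsymm := second_derivative_symmetric hdf hd2.hasFDerivAt (ee i) (ee j)
  have e1 : pd i (pd j f) x = fderiv ℝ (fderiv ℝ f) x (ee i) (ee j) := by
    unfold pd
    exact fderiv_eval_clm hd2 (ee j) (ee i)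
  have e2 : pd j (pd i f) x = fderiv ℝ (fderiv ℝ f) x (ee j) (ee i) := by
    unfold pd
    exact fderiv_eval_clm hd2 (ee i) (ee j)
  rw [e1, e2, hsymm]

lemma pd_Dk_comm {f : E → ℂ} (hf : ContDiff ℝ (⊤:ℕ∞) f) (k : ℕ) :
    ∀ (d : Fin k → Fin N) (j : Fin N) (x : E),
      pd j (fun y => Dk k f d y) x = Dk k (pd j f) d x := by
  induction k with
  | zero =>
    intro d j x
    have : (fun y => Dk 0 f d y) = f := funext (fun y => Dk_zero f d y)
    rw [this]
    rw [Dk_zero]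
  | succ k ih =>
    intro d j x
    have e1 : (fun y => Dk (k+1) f d y) = pd (d 0) (fun y => Dk k f (Fin.tail d) y) :=
      funext (fun y => Dk_succ_left hf k d y)
    have e2 : (fun y => Dk k f (Fin.tail d) y) = fun y => Dk k f (Fin.tail d) y := rfl
    rw [e1]
    have hG : ContDiff ℝ (⊤:ℕ∞) (fun y => Dk k f (Fin.tail d) y) := smooth_Dk hf k _
    rw [pd_symm hG j (d 0) x]
    have e3 : pd j (fun y => Dk k f (Fin.tail d) y) = fun y => Dk k (pd j f) (Fin.tail d) y := by
      funext y
      exact ih (Fin.tail d) j y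
    rw [e3]
    exact (Dk_succ_left (smooth_pd hf j) k d x).symm

lemma norm_Dk_le (k : ℕ) (f : E → ℂ) (d : Fin k → Fin N) (x : E) :
    ‖Dk k f d x‖ ≤ ‖iteratedFDeriv ℝ k f x‖ := by
  have := (iteratedFDeriv ℝ k f x).le_opNorm (fun i => ee (d i))
  simpa [norm_ee, Dk_eq] using this

lemma Dk_const_mul {g : E → ℂ} (hg : ContDiff ℝ (⊤:ℕ∞) g) (c : ℂ) (k : ℕ)
    (d : Fin k → Fin N) (x : E) :
    Dk k (fun y => c * g y) d x = c * Dk k g d x := by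
  have : (fun y => c * g y) = fun y => c • g y := by funext y; simp [smul_eq_mul]
  rw [this, Dk_eq, iteratedFDeriv_const_smul_apply' (hg.of_le (mod_cast le_top)).contDiffAt]
  simp [Dk_eq, smul_eq_mul]

lemma lap_eq_sum_pd {f : E → ℂ} (hf : ContDiff ℝ (⊤:ℕ∞) f) :
    lap f = fun y => ∑ i : Fin N, pd i (pd i f) y := by
  funext y
  unfold lap
  congr 1
  funext i
  have h1 : pd i (pd i f) y = Dk 1 (pd i f) (fun _ => i) y := by
    rw [Dk_eq, iteratedFDeriv_one_apply]
    rfl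
  have h2 : Dk 1 (pd i f) (fun _ => i) y = Dk 2 f (Fin.snoc (fun _ => i) i) y :=
    Dk_succ_right hf 1 (fun _ => i) i y
  have h3 : (Fin.snoc (fun _ : Fin 1 => i) i : Fin 2 → Fin N) = fun _ => i := by
    funext z
    fin_cases z <;> simp [Fin.snoc]
  rw [h1, h2, h3]
  rfl

lemma Dk_lap {f : E → ℂ} (hf : ContDiff ℝ (⊤:ℕ∞) f) (k : ℕ) (d : Fin k → Fin N) (x : E) :
    Dk k (fun y => lap f y) d x
      = ∑ i : Fin N, Dk (k+2) f (Fin.snoc (Fin.snoc d i) i) x := by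
  have e0 : (fun y => lap f y) = (∑ i ∈ Finset.univ, (fun y => pd i (pd i f) y) ·) := by
    funext y
    rw [show lap f y = (lap f) y from rfl, lap_eq_sum_pd hf]
  rw [Dk_eq, e0, iteratedFDeriv_sum (fun i _ => ((smooth_pd (smooth_pd hf i) i).of_le
    (mod_cast le_top)))]
  simp only [Finset.sum_apply, ContinuousMultilinearMap.sum_apply]
  congr 1
  funext i
  rw [← Dk_eq, Dk_succ_right (smooth_pd hf i) k d i x, Dk_succ_right hf (k+1) _ i x]


-- chunk 3 : difference quotients
noncomputable def Q : (k : ℕ) → (Fin k → Fin N) → (EuclideanSpace ℝ (Fin N) → ℂ) → ℝ →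
    EuclideanSpace ℝ (Fin N) → ℂ
  | 0, _, f, _, x => f x
  | (k+1), d, f, h, x =>
      h⁻¹ • (Q k (Fin.tail d) f h (x + h • ee (d 0)) - Q k (Fin.tail d) f h x)

lemma Q_zero (d : Fin 0 → Fin N) (f : E → ℂ) (h : ℝ) (x : E) : Q 0 d f h x = f x := rfl

lemma Q_succ (k : ℕ) (d : Fin (k+1) → Fin N) (f : E → ℂ) (h : ℝ) (x : E) :
    Q (k+1) d f h x
      = h⁻¹ • (Q k (Fin.tail d) f h (x + h • ee (d 0)) - Q k (Fin.tail d) f h x) := rfl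

lemma Q_smul (k : ℕ) : ∀ (d : Fin k → Fin N) (g : E → ℂ) (c : ℝ) (h : ℝ) (x : E),
    Q k d (fun y => c • g y) h x = c • Q k d g h x := by
  induction k with
  | zero => intro d g c h x; rfl
  | succ k ih =>
    intro d g c h x
    simp only [Q_succ, ih]
    module

lemma Q_smulC (k : ℕ) : ∀ (d : Fin k → Fin N) (g : E → ℂ) (c : ℂ) (h : ℝ) (x : E),
    Q k d (fun y => c • g y) h x = c • Q k d g h x := by
  induction k with
  | zero => intro d g c h x; rfl
  | succ k ih =>
    intro d g c h x
    simp only [Q_succ, ih]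
    simp only [smul_eq_mul, Complex.real_smul]
    ring

lemma Q_const_mul (k : ℕ) (d : Fin k → Fin N) (g : E → ℂ) (c : ℂ) (h : ℝ) (x : E) :
    Q k d (fun y => c * g y) h x = c * Q k d g h x := by
  have e1 : (fun y => c * g y) = fun y => c • g y := by funext y; simp [smul_eq_mul]
  rw [e1, Q_smulC, smul_eq_mul]

lemma Q_hasDerivAt_param (k : ℕ) : ∀ (d : Fin k → Fin N) (w : ℝ → E → ℂ) (w' : E → ℂ)
    (h : ℝ) (s₀ : ℝ), (∀ y : E, HasDerivAt (fun s => w s y) (w' y) s₀) → ∀ (x : E),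
    HasDerivAt (fun s => Q k d (w s) h x) (Q k d w' h x) s₀ := by
  induction k with
  | zero => intro d w w' h s₀ hw x; exact hw x
  | succ k ih =>
    intro d w w' h s₀ hw x
    simp only [Q_succ]
    exact (((ih (Fin.tail d) w w' h s₀ hw (x + h • ee (d 0))).sub
      (ih (Fin.tail d) w w' h s₀ hw x))).const_smul h⁻¹

lemma hasDerivAt_line {F : E → ℂ} (hF : Differentiable ℝ F) (x w : E) (τ₀ : ℝ) :
    HasDerivAt (fun τ : ℝ => F (x + τ • w)) (fderiv ℝ F (x + τ₀ • w) w) τ₀ := by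
  have hline : HasDerivAt (fun τ : ℝ => x + τ • w) w τ₀ := by
    simpa using ((hasDerivAt_id τ₀).smul_const w).const_add x
  exact (hF _).hasFDerivAt.comp_hasDerivAt τ₀ hline

lemma Q_hasDerivAt_line (k : ℕ) : ∀ (d : Fin k → Fin N) (f : E → ℂ),
    Differentiable ℝ f → ∀ (h : ℝ) (x w : E) (τ₀ : ℝ),
    HasDerivAt (fun τ : ℝ => Q k d f h (x + τ • w))
      (Q k d (fun y => fderiv ℝ f y w) h (x + τ₀ • w)) τ₀ := by
  induction k with
  | zero => intro d f hf h x w τ₀; exact hasDerivAt_line hf x w τ₀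
  | succ k ih =>
    intro d f hf h x w τ₀
    have h1 := ih (Fin.tail d) f hf h (x + h • ee (d 0)) w τ₀
    have h2 := ih (Fin.tail d) f hf h x w τ₀
    have h3 := (h1.sub h2).const_smul h⁻¹
    have e : (fun τ : ℝ => Q (k+1) d f h (x + τ • w))
        = fun τ : ℝ => h⁻¹ • (Q k (Fin.tail d) f h ((x + h • ee (d 0)) + τ • w)
            - Q k (Fin.tail d) f h (x + τ • w)) := by
      funext τ
      rw [Q_succ, show (x + τ • w) + h • ee (d 0) = (x + h • ee (d 0)) + τ • w from by abel]
    rw [e, Q_succ, show (x + τ₀ • w) + h • ee (d 0) = (x + h • ee (d 0)) + τ₀ • w from by abel]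
    exact h3

lemma mvt01 {g g' : ℝ → ℂ} {C : ℝ}
    (hg : ∀ τ ∈ Set.Icc (0:ℝ) 1, HasDerivAt g (g' τ) τ)
    (hC : ∀ τ ∈ Set.Icc (0:ℝ) 1, ‖g' τ‖ ≤ C) : ‖g 1 - g 0‖ ≤ C := by
  have h := norm_image_sub_le_of_norm_deriv_le_segment'
    (f := g) (f' := g') (a := 0) (b := 1)
    (fun τ hτ => (hg τ hτ).hasDerivWithinAt)
    (fun τ hτ => hC τ (Set.Ico_subset_Icc_self hτ)) 1 (by norm_num)
  simpa using h

-- chunk 4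
lemma norm_inv_smul {h : ℝ} (z : ℂ) : ‖h⁻¹ • z‖ = |h|⁻¹ * ‖z‖ := by
  rw [norm_smul, Real.norm_eq_abs, abs_inv]

lemma dist_line (x : E) (w : E) (τ : ℝ) : dist (x + τ • w) x = |τ| * ‖w‖ := by
  rw [dist_eq_norm, add_sub_cancel_left, norm_smul, Real.norm_eq_abs]

lemma Q_norm_le (k : ℕ) : ∀ (d : Fin k → Fin N) (f : E → ℂ), ContDiff ℝ (⊤:ℕ∞) f →
    ∀ (h : ℝ) (x : E) (M : ℝ),
    (∀ (d' : Fin k → Fin N) (ξ : E), dist ξ x ≤ k * |h| → ‖Dk k f d' ξ‖ ≤ M) →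
    ‖Q k d f h x‖ ≤ M := by
  induction k with
  | zero =>
    intro d f hf h x M hM
    rw [Q_zero, ← Dk_zero f d x]
    exact hM d x (by simp)
  | succ k ih =>
    intro d f hf h x M hM
    have hM0 : 0 ≤ M := le_trans (norm_nonneg _) (hM d x (by simp; positivity))
    by_cases hh : h = 0
    · simp [Q_succ, hh, hM0]
    · have hdf : Differentiable ℝ f := hf.differentiable (by simp)
      set e := ee (d 0) with he
      set tl := Fin.tail d with htl
      -- the function φ
      have hφ : ∀ τ ∈ Set.Icc (0:ℝ) 1,
          HasDerivAt (fun τ : ℝ => Q k tl f h (x + τ • (h • e)))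
            (h • Q k tl (pd (d 0) f) h (x + τ • (h • e))) τ := by
        intro τ _
        have h1 := Q_hasDerivAt_line k tl f hdf h x (h • e) τ
        have e2 : (fun y => fderiv ℝ f y (h • e)) = fun y => h • pd (d 0) f y := by
          funext y
          exact (fderiv ℝ f y).map_smul h e
        rwa [e2, Q_smul] at h1
      have hbound : ∀ τ ∈ Set.Icc (0:ℝ) 1,
          ‖h • Q k tl (pd (d 0) f) h (x + τ • (h • e))‖ ≤ |h| * M := by
        intro τ hτ
        rw [norm_smul, Real.norm_eq_abs]
        have hQ : ‖Q k tl (pd (d 0) f) h (x + τ • (h • e))‖ ≤ M := by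
          apply ih tl (pd (d 0) f) (smooth_pd hf (d 0)) h _ M
          intro d' ξ hξ
          rw [Dk_succ_right hf k d' (d 0) ξ]
          apply hM
          calc dist ξ x ≤ dist ξ (x + τ • (h • e)) + dist (x + τ • (h • e)) x :=
                dist_triangle _ _ _
            _ ≤ k * |h| + |h| := by
                have h2 : dist (x + τ • (h • e)) x ≤ |h| := by
                  rw [dist_line, norm_smul, Real.norm_eq_abs, norm_ee]
                  calc |τ| * (|h| * 1) = |τ| * |h| := by ring
                    _ ≤ 1 * |h| := by
                      apply mul_le_mul_of_nonneg_right _ (abs_nonneg h)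
                      rw [abs_le]; constructor <;> [linarith [hτ.1]; exact hτ.2]
                    _ = |h| := one_mul _
                linarith [hξ]
            _ = (k+1 : ℕ) * |h| := by push_cast; ring
        exact mul_le_mul_of_nonneg_left hQ (abs_nonneg h)
      have hmvt := mvt01 hφ hbound
      rw [one_smul, zero_smul, add_zero] at hmvt
      rw [Q_succ, norm_inv_smul]
      calc |h|⁻¹ * ‖Q k tl f h (x + h • e) - Q k tl f h x‖ ≤ |h|⁻¹ * (|h| * M) := by
            apply mul_le_mul_of_nonneg_left hmvt (by positivity)
        _ = M := by
            field_simp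

-- chunk 5
lemma Dk_lipschitz_dir {f : E → ℂ} (hf : ContDiff ℝ (⊤:ℕ∞) f) (k : ℕ)
    (d : Fin k → Fin N) (j : Fin N) (x : E) (a : ℝ) (M : ℝ)
    (hM : ∀ (d' : Fin (k+1) → Fin N) (ξ : E), dist ξ x ≤ |a| → ‖Dk (k+1) f d' ξ‖ ≤ M) :
    ‖Dk k f d (x + a • ee j) - Dk k f d x‖ ≤ |a| * M := by
  have hd : Differentiable ℝ (fun y => Dk k f d y) :=
    (smooth_Dk hf k d).differentiable (by simp)
  have hM0 : 0 ≤ M := le_trans (norm_nonneg _) (hM (Fin.cons j d) x (by simp))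
  have hdist : ∀ τ : ℝ, τ ∈ Set.Icc (0:ℝ) 1 → dist (x + τ • (a • ee j)) x ≤ |a| := by
    intro τ hτ
    rw [dist_line, norm_smul, Real.norm_eq_abs, norm_ee, mul_one]
    calc |τ| * |a| ≤ 1 * |a| := by
          apply mul_le_mul_of_nonneg_right _ (abs_nonneg a)
          rw [abs_le]; exact ⟨by linarith [hτ.1], hτ.2⟩
      _ = |a| := one_mul _
  have hg : ∀ τ ∈ Set.Icc (0:ℝ) 1,
      HasDerivAt (fun τ : ℝ => Dk k f d (x + τ • (a • ee j)))
        (a • Dk (k+1) f (Fin.cons j d) (x + τ • (a • ee j))) τ := by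
    intro τ _
    have h1 := hasDerivAt_line hd x (a • ee j) τ
    have e3 : ∀ ξ : E, Dk (k+1) f (Fin.cons j d) ξ = fderiv ℝ (fun y => Dk k f d y) ξ (ee j) := by
      intro ξ
      rw [Dk_succ_left hf k (Fin.cons j d) ξ]
      simp only [Fin.tail_cons, Fin.cons_zero]
    have e2 : fderiv ℝ (fun y => Dk k f d y) (x + τ • (a • ee j)) (a • ee j)
        = a • Dk (k+1) f (Fin.cons j d) (x + τ • (a • ee j)) := by
      rw [ContinuousLinearMap.map_smul, e3]
    rwa [e2] at h1
  have hb : ∀ τ ∈ Set.Icc (0:ℝ) 1,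
      ‖a • Dk (k+1) f (Fin.cons j d) (x + τ • (a • ee j))‖ ≤ |a| * M := by
    intro τ hτ
    rw [norm_smul, Real.norm_eq_abs]
    exact mul_le_mul_of_nonneg_left
      (hM (Fin.cons j d) _ (hdist τ hτ)) (abs_nonneg a)
  have hmvt := mvt01 hg hb
  rw [one_smul, zero_smul, add_zero] at hmvt
  exact hmvt

lemma Q_approx (k : ℕ) : ∀ (d : Fin k → Fin N) (f : E → ℂ), ContDiff ℝ (⊤:ℕ∞) f →
    ∀ (h : ℝ), h ≠ 0 → ∀ (x : E) (M : ℝ),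
    (∀ (d' : Fin (k+1) → Fin N) (y : E), ‖Dk (k+1) f d' y‖ ≤ M) →
    (∀ (d' : Fin (k+2) → Fin N) (y : E), ‖Dk (k+2) f d' y‖ ≤ M) →
    ‖Q k d f h x - Dk k f d x‖ ≤ 2 * k * |h| * M := by
  induction k with
  | zero =>
    intro d f hf h hh x M hM1 hM2
    rw [Q_zero, ← Dk_zero f d x]
    simp
  | succ k ih =>
    intro d f hf h hh x M hM1 hM2
    have hM0 : 0 ≤ M := le_trans (norm_nonneg _) (hM1 (fun _ => d 0) x)
    have hdf : Differentiable ℝ f := hf.differentiable (by simp)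
    have habs : (0:ℝ) < |h| := abs_pos.2 hh
    set e := ee (d 0) with he
    set tl := Fin.tail d with htl
    set g : E → ℂ := fun y => Dk k f tl y with hgdef
    have hgd : Differentiable ℝ g := (smooth_Dk hf k tl).differentiable (by simp)
    set D1 := Dk (k+1) f d x with hD1def
    -- Term 1 : MVT for  Q - g along the segment
    have hψ : ∀ τ ∈ Set.Icc (0:ℝ) 1,
        HasDerivAt (fun τ : ℝ => Q k tl f h (x + τ • (h • e)) - g (x + τ • (h • e)))
          (h • (Q k tl (pd (d 0) f) h (x + τ • (h • e))
              - Dk k (pd (d 0) f) tl (x + τ • (h • e)))) τ := by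
      intro τ _
      have h1 := Q_hasDerivAt_line k tl f hdf h x (h • e) τ
      have e2 : (fun y => fderiv ℝ f y (h • e)) = fun y => h • pd (d 0) f y := by
        funext y
        exact (fderiv ℝ f y).map_smul h e
      rw [e2, Q_smul] at h1
      have h2 := hasDerivAt_line hgd x (h • e) τ
      have e4 : fderiv ℝ g (x + τ • (h • e)) (h • e)
          = h • Dk k (pd (d 0) f) tl (x + τ • (h • e)) := by
        rw [ContinuousLinearMap.map_smul]
        congr 1
        rw [show fderiv ℝ g (x + τ • (h • e)) (ee (d 0))
            = pd (d 0) (fun y => Dk k f tl y) (x + τ • (h • e)) from rfl]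
        exact pd_Dk_comm hf k tl (d 0) _
      rw [e4] at h2
      have := h1.sub h2
      rwa [← smul_sub] at this
    have hψb : ∀ τ ∈ Set.Icc (0:ℝ) 1,
        ‖h • (Q k tl (pd (d 0) f) h (x + τ • (h • e))
            - Dk k (pd (d 0) f) tl (x + τ • (h • e)))‖ ≤ |h| * (2 * k * |h| * M) := by
      intro τ _
      rw [norm_smul, Real.norm_eq_abs]
      apply mul_le_mul_of_nonneg_left _ (abs_nonneg h)
      apply ih tl (pd (d 0) f) (smooth_pd hf (d 0)) h hh _ M
      · intro d' y
        rw [Dk_succ_right hf (k+1) d' (d 0) y]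
        exact hM1 _ y
      · intro d' y
        rw [Dk_succ_right hf (k+2) d' (d 0) y]
        exact hM2 _ y
    have hmvt1 := mvt01 hψ hψb
    rw [one_smul, zero_smul, add_zero] at hmvt1
    -- Term 2 : MVT for g minus its linearization
    have hφ : ∀ τ ∈ Set.Icc (0:ℝ) 1,
        HasDerivAt (fun τ : ℝ => g (x + τ • (h • e)) - τ • (h • D1))
          (h • (Dk (k+1) f d (x + τ • (h • e)) - D1)) τ := by
      intro τ _
      have h2 := hasDerivAt_line hgd x (h • e) τ
      have e4 : fderiv ℝ g (x + τ • (h • e)) (h • e)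
          = h • Dk (k+1) f d (x + τ • (h • e)) := by
        rw [ContinuousLinearMap.map_smul]
        congr 1
        exact (Dk_succ_left hf k d _).symm
      rw [e4] at h2
      have h3 : HasDerivAt (fun τ : ℝ => τ • (h • D1)) (h • D1) τ := by
        simpa using (hasDerivAt_id τ).smul_const (h • D1)
      have := h2.sub h3
      rwa [← smul_sub] at this
    have hφb : ∀ τ ∈ Set.Icc (0:ℝ) 1,
        ‖h • (Dk (k+1) f d (x + τ • (h • e)) - D1)‖ ≤ |h| * (|h| * M) := by
      intro τ hτ
      rw [norm_smul, Real.norm_eq_abs]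
      apply mul_le_mul_of_nonneg_left _ (abs_nonneg h)
      have e5 : x + τ • (h • e) = x + (τ * h) • ee (d 0) := by
        rw [smul_smul]
      rw [hD1def, e5]
      have hlip := Dk_lipschitz_dir hf (k+1) d (d 0) x (τ * h) M
        (fun d' ξ _ => hM1 d' ξ)
      calc ‖Dk (k+1) f d (x + (τ * h) • ee (d 0)) - Dk (k+1) f d x‖ ≤ |τ * h| * M := hlip
        _ ≤ |h| * M := by
            apply mul_le_mul_of_nonneg_right _ hM0
            rw [abs_mul]
            calc |τ| * |h| ≤ 1 * |h| := by
                  apply mul_le_mul_of_nonneg_right _ (abs_nonneg h)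
                  rw [abs_le]; exact ⟨by linarith [hτ.1], hτ.2⟩
              _ = |h| := one_mul _
    have hmvt2 := mvt01 hφ hφb
    simp only [one_smul, zero_smul, add_zero, sub_zero] at hmvt2
    -- combine
    have hinv : h⁻¹ • (h • D1) = D1 := by
      rw [smul_smul, inv_mul_cancel₀ hh, one_smul]
    have hsplit : h⁻¹ • ((Q k tl f h (x + h • e) - Q k tl f h x) - h • D1)
        = h⁻¹ • (Q k tl f h (x + h • e) - Q k tl f h x) - D1 := by
      rw [smul_sub, hinv]
    have e6 : ((Q k tl f h (x + h • e) - g (x + h • e)) - (Q k tl f h x - g x))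
        + ((g (x + h • e) - h • D1) - g x)
        = (Q k tl f h (x + h • e) - Q k tl f h x) - h • D1 := by abel
    have key_eq : Q (k+1) d f h x - D1
        = h⁻¹ • (((Q k tl f h (x + h • e) - g (x + h • e)) - (Q k tl f h x - g x))
            + ((g (x + h • e) - h • D1) - g x)) := by
      rw [e6, hsplit, Q_succ]
    rw [key_eq]
    calc ‖h⁻¹ • (((Q k tl f h (x + h • e) - g (x + h • e)) - (Q k tl f h x - g x))
            + ((g (x + h • e) - h • D1) - g x))‖
        ≤ |h|⁻¹ * (‖(Q k tl f h (x + h • e) - g (x + h • e)) - (Q k tl f h x - g x)‖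
            + ‖(g (x + h • e) - h • D1) - g x‖) := by
          rw [norm_inv_smul]
          apply mul_le_mul_of_nonneg_left (norm_add_le _ _) (by positivity)
      _ ≤ |h|⁻¹ * (|h| * (2 * k * |h| * M) + |h| * (|h| * M)) := by
          apply mul_le_mul_of_nonneg_left _ (by positivity)
          exact add_le_add hmvt1 hmvt2
      _ = (2 * k + 1) * |h| * M := by field_simp
      _ ≤ 2 * (k + 1) * |h| * M := by nlinarith [abs_nonneg h, hM0, mul_nonneg (abs_nonneg h) hM0]
      _ = 2 * (↑(k + 1)) * |h| * M := by push_cast; ring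

lemma landau {f : E → ℂ} (hf : ContDiff ℝ (⊤:ℕ∞) f) (k : ℕ) (d : Fin (k+1) → Fin N)
    (x : E) (M₀ M₂ : ℝ)
    (h₀ : ∀ ξ : E, dist ξ x ≤ 1 → ‖Dk k f (Fin.tail d) ξ‖ ≤ M₀)
    (h₂ : ∀ (d'' : Fin (k+2) → Fin N) (ξ : E), dist ξ x ≤ 1 → ‖Dk (k+2) f d'' ξ‖ ≤ M₂) :
    ‖Dk (k+1) f d x‖ ≤ 2 * M₀ + M₂ := by
  set e := ee (d 0) with he
  set g : E → ℂ := fun y => Dk k f (Fin.tail d) y with hgdef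
  set G : E → ℂ := fun y => Dk (k+1) f d y with hGdef
  have hgd : Differentiable ℝ g := (smooth_Dk hf k _).differentiable (by simp)
  have hM₂0 : 0 ≤ M₂ := le_trans (norm_nonneg _) (h₂ (Fin.cons (d 0) d) x (by simp))
  have hdist : ∀ τ : ℝ, τ ∈ Set.Icc (0:ℝ) 1 → dist (x + τ • e) x ≤ 1 := by
    intro τ hτ
    rw [dist_line, norm_ee, mul_one]
    rw [abs_le]; exact ⟨by linarith [hτ.1], hτ.2⟩
  have hφ : ∀ τ ∈ Set.Icc (0:ℝ) 1,
      HasDerivAt (fun τ : ℝ => g (x + τ • e) - τ • G x) (G (x + τ • e) - G x) τ := by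
    intro τ _
    have h2 := hasDerivAt_line hgd x e τ
    have e4 : fderiv ℝ g (x + τ • e) e = G (x + τ • e) := (Dk_succ_left hf k d _).symm
    rw [e4] at h2
    have h3 : HasDerivAt (fun τ : ℝ => τ • G x) (G x) τ := by
      simpa using (hasDerivAt_id τ).smul_const (G x)
    exact h2.sub h3
  have hφb : ∀ τ ∈ Set.Icc (0:ℝ) 1, ‖G (x + τ • e) - G x‖ ≤ M₂ := by
    intro τ hτ
    have e5 : x + τ • e = x + τ • ee (d 0) := by rw [he]
    have hlip := Dk_lipschitz_dir hf (k+1) d (d 0) x τ M₂ ?_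
    · calc ‖G (x + τ • e) - G x‖ = ‖Dk (k+1) f d (x + τ • ee (d 0)) - Dk (k+1) f d x‖ := by
            rw [hGdef, he]
        _ ≤ |τ| * M₂ := hlip
        _ ≤ 1 * M₂ := by
            apply mul_le_mul_of_nonneg_right _ hM₂0
            rw [abs_le]; exact ⟨by linarith [hτ.1], hτ.2⟩
        _ = M₂ := one_mul _
    · intro d' ξ hξ
      apply h₂ d' ξ
      calc dist ξ x ≤ |τ| := hξ
        _ ≤ 1 := by rw [abs_le]; exact ⟨by linarith [hτ.1], hτ.2⟩
  have hmvt := mvt01 hφ hφb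
  simp only [one_smul, zero_smul, add_zero, sub_zero] at hmvt
  have idq : G x = (g (x + e) - g x) - ((g (x + e) - G x) - g x) := by abel
  calc ‖G x‖ = ‖(g (x + e) - g x) - ((g (x + e) - G x) - g x)‖ := by rw [← idq]
    _ ≤ ‖g (x + e) - g x‖ + ‖(g (x + e) - G x) - g x‖ := norm_sub_le _ _
    _ ≤ (‖g (x + e)‖ + ‖g x‖) + M₂ := add_le_add (norm_sub_le _ _) hmvt
    _ ≤ (M₀ + M₀) + M₂ := by
        apply add_le_add _ le_rfl
        apply add_le_add
        · apply h₀
          have : dist (x + e) x ≤ 1 := by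
            rw [dist_eq_norm, add_sub_cancel_left, norm_ee]
          exact this
        · exact h₀ x (by simp)
    _ = 2 * M₀ + M₂ := by ring

-- chunk 6
lemma schwartz_Dk_bound (f : 𝓢(EuclideanSpace ℝ (Fin N), ℂ)) (k : ℕ) :
    ∃ M : ℝ, 0 ≤ M ∧ ∀ j : ℕ, j ≤ k → ∀ (d : Fin j → Fin N) (x : E), ‖Dk j (⇑f) d x‖ ≤ M := by
  have hC : ∀ j : ℕ, ∃ C : ℝ, 0 < C ∧ ∀ x : E, ‖iteratedFDeriv ℝ j (⇑f) x‖ ≤ C := by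
    intro j
    obtain ⟨C, hC0, hCx⟩ := f.decay 0 j
    exact ⟨C, hC0, fun x => by simpa using hCx x⟩
  choose C hC0 hCb using hC
  refine ⟨∑ j ∈ Finset.range (k+1), C j, Finset.sum_nonneg (fun j _ => (hC0 j).le), ?_⟩
  intro j hj d x
  calc ‖Dk j (⇑f) d x‖ ≤ ‖iteratedFDeriv ℝ j (⇑f) x‖ := norm_Dk_le j _ d x
    _ ≤ C j := hCb j x
    _ ≤ ∑ j ∈ Finset.range (k+1), C j :=
        Finset.single_le_sum (fun i _ => (hC0 i).le) (Finset.mem_range.2 (by omega))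

lemma smooth_lap {f : E → ℂ} (hf : ContDiff ℝ (⊤:ℕ∞) f) :
    ContDiff ℝ (⊤:ℕ∞) (fun y => lap f y) := by
  rw [show (fun y => lap f y) = lap f from rfl, lap_eq_sum_pd hf]
  exact ContDiff.sum (fun i _ => smooth_pd (smooth_pd hf i) i)

lemma key (v : ℝ → 𝓢(EuclideanSpace ℝ (Fin N), ℂ))
    (hv : ∀ (r : ℝ) (x : EuclideanSpace ℝ (Fin N)),
      HasDerivAt (fun s => v s x) (Complex.I * lap (fun y => v r y) x) r)
    (t : ℝ) (ht : 0 ≤ t) (k : ℕ) (s : ℝ) (hs : s ∈ Set.Icc (0:ℝ) t)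
    (d : Fin k → Fin N) (x : E) (B : ℝ) (hB0 : 0 ≤ B)
    (hB : ∀ r ∈ Set.Icc (0:ℝ) t, ∀ (d'' : Fin (k+2) → Fin N) (ξ : E),
      dist ξ x ≤ k → ‖Dk (k+2) (fun y => v r y) d'' ξ‖ ≤ B) :
    ‖Dk k (fun y => v s y) d x - Dk k (fun y => v 0 y) d x‖ ≤ t * (N * B) := by
  obtain ⟨Ms, hMs0, hMsb⟩ := schwartz_Dk_bound (v s) (k+2)
  obtain ⟨M0, hM00, hM0b⟩ := schwartz_Dk_bound (v 0) (k+2)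
  set MM := max Ms M0 with hMM
  have hMM0 : 0 ≤ MM := le_trans hMs0 (le_max_left _ _)
  have hmain : ∀ h : ℝ, 0 < h → h ≤ 1 →
      ‖Dk k (fun y => v s y) d x - Dk k (fun y => v 0 y) d x‖
        ≤ 4 * k * h * MM + t * (N * B) := by
    intro h hh0 hh1
    have habs : |h| = h := abs_of_pos hh0
    have hA1 := Q_approx k d (fun y => v s y) ((v s).smooth ⊤) h (ne_of_gt hh0) x MM
      (fun d' y => le_trans (hMsb (k+1) (by omega) d' y) (le_max_left _ _))
      (fun d' y => le_trans (hMsb (k+2) (by omega) d' y) (le_max_left _ _))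
    have hA2 := Q_approx k d (fun y => v 0 y) ((v 0).smooth ⊤) h (ne_of_gt hh0) x MM
      (fun d' y => le_trans (hM0b (k+1) (by omega) d' y) (le_max_right _ _))
      (fun d' y => le_trans (hM0b (k+2) (by omega) d' y) (le_max_right _ _))
    rw [habs] at hA1 hA2
    -- the time MVT
    have hmid : ‖Q k d (fun y => v s y) h x - Q k d (fun y => v 0 y) h x‖ ≤ t * (N * B) := by
      have hF : ∀ r ∈ Set.Icc (0:ℝ) s,
          HasDerivWithinAt (fun r : ℝ => Q k d (fun y => v r y) h x)
            (Q k d (fun y => Complex.I * lap (fun z => v r z) y) h x) (Set.Icc (0:ℝ) s) r := by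
        intro r _
        exact (Q_hasDerivAt_param k d (fun r y => v r y)
          (fun y => Complex.I * lap (fun z => v r z) y) h r (fun y => hv r y) x).hasDerivWithinAt
      have hFb : ∀ r ∈ Set.Ico (0:ℝ) s,
          ‖Q k d (fun y => Complex.I * lap (fun z => v r z) y) h x‖ ≤ N * B := by
        intro r hr
        have hrIcc : r ∈ Set.Icc (0:ℝ) t := ⟨hr.1, le_trans hr.2.le hs.2⟩
        have hsm : ContDiff ℝ (⊤:ℕ∞) (fun y => Complex.I * lap (fun z => v r z) y) :=
          contDiff_const.mul (smooth_lap ((v r).smooth ⊤))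
        apply Q_norm_le k d _ hsm h x (N * B)
        intro d' ξ hξ
        have hdist : dist ξ x ≤ (k : ℝ) := by
          calc dist ξ x ≤ k * |h| := hξ
            _ ≤ k * 1 := by
                apply mul_le_mul_of_nonneg_left _ (by positivity)
                rw [habs]; exact hh1
            _ = k := mul_one _
        have e1 : Dk k (fun y => Complex.I * lap (fun z => v r z) y) d' ξ
            = Complex.I * Dk k (fun y => lap (fun z => v r z) y) d' ξ :=
          Dk_const_mul (smooth_lap ((v r).smooth ⊤)) Complex.I k d' ξ
        rw [e1, norm_mul, Complex.norm_I, one_mul,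
          Dk_lap ((v r).smooth ⊤) k d' ξ]
        calc ‖∑ i : Fin N, Dk (k+2) (fun z => v r z) (Fin.snoc (Fin.snoc d' i) i) ξ‖
            ≤ ∑ i : Fin N, ‖Dk (k+2) (fun z => v r z) (Fin.snoc (Fin.snoc d' i) i) ξ‖ :=
              norm_sum_le _ _
          _ ≤ ∑ _i : Fin N, B := Finset.sum_le_sum (fun i _ => hB r hrIcc _ ξ hdist)
          _ = N * B := by simp [mul_comm]
      have hseg := norm_image_sub_le_of_norm_deriv_le_segment' hF hFb s
        ⟨hs.1, le_refl s⟩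
      calc ‖Q k d (fun y => v s y) h x - Q k d (fun y => v 0 y) h x‖
          ≤ N * B * (s - 0) := hseg
        _ ≤ N * B * t := by
            apply mul_le_mul_of_nonneg_left _ (by positivity)
            linarith [hs.2]
        _ = t * (N * B) := by ring
    have iden : Dk k (fun y => v s y) d x - Dk k (fun y => v 0 y) d x
        = (Q k d (fun y => v s y) h x - Q k d (fun y => v 0 y) h x)
          - (Q k d (fun y => v s y) h x - Dk k (fun y => v s y) d x)
          + (Q k d (fun y => v 0 y) h x - Dk k (fun y => v 0 y) d x) := by abel
    calc ‖Dk k (fun y => v s y) d x - Dk k (fun y => v 0 y) d x‖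
        = ‖(Q k d (fun y => v s y) h x - Q k d (fun y => v 0 y) h x)
          - (Q k d (fun y => v s y) h x - Dk k (fun y => v s y) d x)
          + (Q k d (fun y => v 0 y) h x - Dk k (fun y => v 0 y) d x)‖ := by rw [← iden]
      _ ≤ ‖(Q k d (fun y => v s y) h x - Q k d (fun y => v 0 y) h x)
          - (Q k d (fun y => v s y) h x - Dk k (fun y => v s y) d x)‖
          + ‖Q k d (fun y => v 0 y) h x - Dk k (fun y => v 0 y) d x‖ := norm_add_le _ _
      _ ≤ (‖Q k d (fun y => v s y) h x - Q k d (fun y => v 0 y) h x‖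
          + ‖Q k d (fun y => v s y) h x - Dk k (fun y => v s y) d x‖)
          + ‖Q k d (fun y => v 0 y) h x - Dk k (fun y => v 0 y) d x‖ :=
            add_le_add (norm_sub_le _ _) le_rfl
      _ ≤ (t * (N * B) + 2 * k * h * MM) + 2 * k * h * MM :=
            add_le_add (add_le_add hmid hA1) hA2
      _ = 4 * k * h * MM + t * (N * B) := by ring
  -- let h → 0
  have hfinal : ∀ ε : ℝ, 0 < ε →
      ‖Dk k (fun y => v s y) d x - Dk k (fun y => v 0 y) d x‖ ≤ t * (N * B) + ε := by
    intro ε hε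
    set c : ℝ := 4 * k * MM with hc
    have hc0 : 0 ≤ c := by positivity
    set h : ℝ := min 1 (ε / (c + 1)) with hhdef
    have hh0 : 0 < h := lt_min one_pos (div_pos hε (by positivity))
    have hh1 : h ≤ 1 := min_le_left _ _
    have hch : c * h ≤ ε := by
      have h2 : h ≤ ε / (c + 1) := min_le_right _ _
      have h3 : c * h ≤ c * (ε / (c + 1)) := mul_le_mul_of_nonneg_left h2 hc0
      have h4 : c * (ε / (c + 1)) ≤ ε := by
        rw [mul_div_assoc'] 
        rw [div_le_iff₀ (by positivity)]
        nlinarith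
      linarith
    have := hmain h hh0 hh1
    have e7 : 4 * (k:ℝ) * h * MM = c * h := by rw [hc]; ring
    rw [e7] at this
    linarith
  exact le_of_forall_pos_le_add hfinal

-- chunk 7 : weight lemmas and ENNReal helpers
lemma one_le_jb (x : E) : 1 ≤ jb x := by
  have h := Real.sqrt_le_sqrt (show (1:ℝ) ≤ 1 + ‖x‖^2 by nlinarith [sq_nonneg ‖x‖])
  rw [Real.sqrt_one] at h
  exact h

lemma jb_pos (x : E) : 0 < jb x := lt_of_lt_of_le one_pos (one_le_jb x)

lemma norm_le_jb (x : E) : ‖x‖ ≤ jb x := by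
  have h := Real.sqrt_le_sqrt (show ‖x‖^2 ≤ 1 + ‖x‖^2 by nlinarith)
  rwa [Real.sqrt_sq (norm_nonneg x)] at h

lemma jb_le_of_dist (x ξ : E) (r : ℝ) (hr : 0 ≤ r) (h : dist x ξ ≤ r) :
    jb x ≤ (2 + r) * jb ξ := by
  have h1 : jb x ≤ 1 + ‖x‖ := by
    have h := Real.sqrt_le_sqrt (show 1 + ‖x‖^2 ≤ (1 + ‖x‖)^2 by nlinarith [norm_nonneg x])
    rwa [Real.sqrt_sq (by positivity)] at h
  have h2 : ‖x‖ ≤ ‖ξ‖ + r := by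
    have h3 : ‖x‖ - ‖ξ‖ ≤ ‖x - ξ‖ := norm_sub_norm_le x ξ
    have h4 : ‖x - ξ‖ = dist x ξ := (dist_eq_norm x ξ).symm
    linarith
  have h5 := one_le_jb ξ
  have h6 := norm_le_jb ξ
  nlinarith

lemma jb_pow_le_of_dist (x ξ : E) (r : ℝ) (hr : 0 ≤ r) (h : dist x ξ ≤ r) (m : ℕ) :
    jb x ^ m ≤ (2 + r)^m * jb ξ ^ m := by
  rw [← mul_pow]
  exact pow_le_pow_left₀ (jb_pos x).le (jb_le_of_dist x ξ r hr h) m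

lemma step_bound {S R A Y : ℝ≥0∞} {u a b : ℝ} (hu : 0 ≤ u) (ha : 0 ≤ a) (hb : 0 ≤ b)
    (hA : A ≤ S + ENNReal.ofReal u * Y)
    (hY : Y ≤ ENNReal.ofReal a * S + ENNReal.ofReal b * R) :
    A ≤ ENNReal.ofReal (1 + u*a) * S + ENNReal.ofReal (u*b) * R := by
  calc A ≤ S + ENNReal.ofReal u * (ENNReal.ofReal a * S + ENNReal.ofReal b * R) :=
        hA.trans (add_le_add le_rfl (mul_le_mul' le_rfl hY))
    _ = ENNReal.ofReal (1 + u*a) * S + ENNReal.ofReal (u*b) * R := by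
        rw [ENNReal.ofReal_add one_pos.le (mul_nonneg hu ha), ENNReal.ofReal_one,
          ENNReal.ofReal_mul hu, ENNReal.ofReal_mul hu]
        ring

lemma mul_step {Y Z S R : ℝ≥0∞} {c a b : ℝ} (hc : 0 ≤ c) (ha : 0 ≤ a) (hb : 0 ≤ b)
    (hY : Y ≤ ENNReal.ofReal c * Z)
    (hZ : Z ≤ ENNReal.ofReal a * S + ENNReal.ofReal b * R) :
    Y ≤ ENNReal.ofReal (c*a) * S + ENNReal.ofReal (c*b) * R := by
  calc Y ≤ ENNReal.ofReal c * (ENNReal.ofReal a * S + ENNReal.ofReal b * R) :=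
        hY.trans (mul_le_mul' le_rfl hZ)
    _ = ENNReal.ofReal (c*a) * S + ENNReal.ofReal (c*b) * R := by
        rw [ENNReal.ofReal_mul hc, ENNReal.ofReal_mul hc]
        ring

lemma mono_bound {S R A : ℝ≥0∞} {a b p q : ℝ}
    (hA : A ≤ ENNReal.ofReal a * S + ENNReal.ofReal b * R)
    (h1 : a ≤ p) (h2 : b ≤ q) :
    A ≤ ENNReal.ofReal p * S + ENNReal.ofReal q * R :=
  hA.trans (add_le_add (mul_le_mul' (ENNReal.ofReal_le_ofReal h1) le_rfl)
    (mul_le_mul' (ENNReal.ofReal_le_ofReal h2) le_rfl))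

end Stmt10Aux


open Stmt10Aux

set_option maxHeartbeats 2000000 in
/-- Weighted L^∞ estimate for derivatives up to order 2n of the free Schrödinger
    evolution v(t) = e^{itΔ}ψ (encoded as a Schwartz-valued solution with ψ = v 0),
    in terms of the data and derivatives of order 2n+2 of the evolution. -/
theorem stmt10 (N : ℕ) (hN : 0 < N) (n m J : ℕ)
    (hn : (N : ℝ) / 2 < n) (hm : (N : ℝ) / 2 + 1 < m) (hJ : 2 * n ≤ J) :
    ∃ C : ℝ, 0 < C ∧
      ∀ (v : ℝ → 𝓢(EuclideanSpace ℝ (Fin N), ℂ)),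
        (∀ (t : ℝ) (x : EuclideanSpace ℝ (Fin N)),
          HasDerivAt (fun s => v s x) (Complex.I * lap (fun y => v t y) x) t) →
        ∀ t : ℝ, 0 ≤ t →
          ∑ k ∈ Finset.range (2 * n + 1), ⨆ d : Fin k → Fin N,
              ⨆ s ∈ Set.Icc (0 : ℝ) t, ⨆ x,
                ENNReal.ofReal (jb x ^ m) * ‖Dk k (fun y => v s y) d x‖₊
          ≤ ENNReal.ofReal (C * (1 + t) ^ n) *
              ∑ k ∈ Finset.range (2 * n + 1), ⨆ d : Fin k → Fin N, ⨆ x,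
                ENNReal.ofReal (jb x ^ m) * ‖Dk k (fun y => v 0 y) d x‖₊
            + ENNReal.ofReal (C * t * (1 + t) ^ n) *
                ⨆ d : Fin (2 * n + 2) → Fin N, ⨆ s ∈ Set.Icc (0 : ℝ) t, ⨆ x,
                  ENNReal.ofReal (jb x ^ m) * ‖Dk (2 * n + 2) (fun y => v s y) d x‖₊ := by
  classical
  have hnn : (0:ℝ) ≤ (n:ℝ) := Nat.cast_nonneg n
  set c₁ : ℝ := N * (2 + 2*(n:ℝ))^m with hc₁def
  have h2n1 : (1:ℝ) ≤ (2 + 2*(n:ℝ))^m := one_le_pow₀ (by linarith)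
  have hc₁1 : 1 ≤ c₁ := by
    have hN1 : (1:ℝ) ≤ N := by exact_mod_cast hN
    nlinarith
  set c₂ : ℝ := 3^(m+1) with hc₂def
  have hc₂1 : 1 ≤ c₂ := one_le_pow₀ (by norm_num)
  set c₄ : ℝ := (1+c₁)^2 * (1+c₂) with hc₄def
  have hc₄1 : 1 ≤ c₄ := by nlinarith
  have hc₁c₄ : c₁ ≤ c₄ := by nlinarith
  have hc₄0 : (0:ℝ) ≤ c₄ := by linarith
  have hc₁0 : (0:ℝ) ≤ c₁ := by linarith
  have hc₂0 : (0:ℝ) ≤ c₂ := by linarith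
  refine ⟨(2*(n:ℝ)+1) * c₄^(n+1), by positivity, ?_⟩
  intro v hv t ht
  set A : ℕ → ℝ≥0∞ := fun k => ⨆ d : Fin k → Fin N,
      ⨆ s ∈ Set.Icc (0 : ℝ) t, ⨆ x,
        ENNReal.ofReal (jb x ^ m) * ‖Dk k (fun y => v s y) d x‖₊ with hAdef
  set Bd : ℕ → ℝ≥0∞ := fun k => ⨆ d : Fin k → Fin N, ⨆ x,
      ENNReal.ofReal (jb x ^ m) * ‖Dk k (fun y => v 0 y) d x‖₊ with hBdef
  set S : ℝ≥0∞ := ∑ k ∈ Finset.range (2*n+1), Bd k with hSdef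
  set R : ℝ≥0∞ := A (2*n+2) with hRdef
  have hjp : ∀ x : EuclideanSpace ℝ (Fin N), (0:ℝ) ≤ jb x ^ m := fun x => pow_nonneg (jb_pos x).le m
  have hjpp : ∀ x : EuclideanSpace ℝ (Fin N), (0:ℝ) < jb x ^ m := fun x =>
    pow_pos (jb_pos x) m
  have hptA : ∀ (k : ℕ) (d : Fin k → Fin N) (s : ℝ), s ∈ Set.Icc (0:ℝ) t →
      ∀ x, ENNReal.ofReal (jb x ^ m) * ‖Dk k (fun y => v s y) d x‖₊ ≤ A k := by
    intro k d s hs x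
    simp only [hAdef]
    exact le_iSup_of_le d (le_iSup_of_le s (le_iSup_of_le hs (le_iSup_of_le x le_rfl)))
  have hptB : ∀ (k : ℕ) (d : Fin k → Fin N) (x : EuclideanSpace ℝ (Fin N)),
      ENNReal.ofReal (jb x ^ m) * ‖Dk k (fun y => v 0 y) d x‖₊ ≤ Bd k := by
    intro k d x
    simp only [hBdef]
    exact le_iSup_of_le d (le_iSup_of_le x le_rfl)
  have hext : ∀ (k : ℕ), A k ≠ ⊤ → ∀ (d : Fin k → Fin N) (s : ℝ), s ∈ Set.Icc (0:ℝ) t →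
      ∀ x, jb x ^ m * ‖Dk k (fun y => v s y) d x‖ ≤ (A k).toReal := by
    intro k hfin d s hs x
    have h1 := hptA k d s hs x
    have h2 := ENNReal.toReal_mono hfin h1
    rwa [ENNReal.toReal_mul, ENNReal.toReal_ofReal (hjp x), ENNReal.coe_toReal,
      coe_nnnorm] at h2
  have hsupA : ∀ (k : ℕ) (X : ℝ≥0∞),
      (∀ (d : Fin k → Fin N) (s : ℝ), s ∈ Set.Icc (0:ℝ) t → ∀ x,
        ENNReal.ofReal (jb x ^ m) * ‖Dk k (fun y => v s y) d x‖₊ ≤ X) → A k ≤ X := by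
    intro k X hX
    simp only [hAdef]
    exact iSup_le fun d => iSup_le fun s => iSup_le fun hs => iSup_le fun x => hX d s hs x
  have hBS : ∀ k : ℕ, k ≤ 2*n → Bd k ≤ S := by
    intro k hk
    rw [hSdef]
    exact Finset.single_le_sum (f := Bd) (fun i _ => by simp) (Finset.mem_range.2 (by omega))
  -- ** recursion inequality **
  have hR1 : ∀ k : ℕ, k ≤ 2*n → A k ≤ S + ENNReal.ofReal (t * c₁) * A (k+2) := by
    intro k hk
    apply hsupA
    intro d s hs x
    have hterm0 : ENNReal.ofReal (jb x ^ m) * ‖Dk k (fun y => v 0 y) d x‖₊ ≤ S :=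
      le_trans (hptB k d x) (hBS k hk)
    by_cases hfin : A (k+2) = ⊤
    · rcases eq_or_lt_of_le ht with ht0 | ht0
      · have hs0 : s = 0 := le_antisymm (by rw [ht0]; exact hs.2) hs.1
        rw [hs0]
        exact le_trans hterm0 le_self_add
      · have htop : ENNReal.ofReal (t * c₁) * A (k+2) = ⊤ := by
          rw [hfin]
          exact ENNReal.mul_top (ne_of_gt (ENNReal.ofReal_pos.2 (by nlinarith)))
        rw [htop, add_top]
        exact le_top
    · set Mk := (A (k+2)).toReal with hMkdef
      have hMk0 : 0 ≤ Mk := ENNReal.toReal_nonneg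
      set Bc : ℝ := (2 + 2*(n:ℝ))^m * Mk / jb x ^ m with hBcdef
      have hBc0 : 0 ≤ Bc := by
        rw [hBcdef]
        exact div_nonneg (mul_nonneg (pow_nonneg (by linarith) m) hMk0) (hjp x)
      have hBbound : ∀ r ∈ Set.Icc (0:ℝ) t, ∀ (d'' : Fin (k+2) → Fin N) ξ,
          dist ξ x ≤ (k:ℝ) → ‖Dk (k+2) (fun y => v r y) d'' ξ‖ ≤ Bc := by
        intro r hr d'' ξ hξ
        have h1 := hext (k+2) hfin d'' r hr ξ
        rw [← hMkdef] at h1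
        have hjb : jb x ^ m ≤ (2 + 2*(n:ℝ))^m * jb ξ ^ m := by
          apply jb_pow_le_of_dist x ξ (2*(n:ℝ)) (by linarith) ?_ m
          rw [dist_comm]
          calc dist ξ x ≤ (k:ℝ) := hξ
            _ ≤ 2*(n:ℝ) := by
                have : (k:ℝ) ≤ ((2*n : ℕ) : ℝ) := Nat.cast_le.2 (by omega)
                push_cast at this
                linarith
        rw [hBcdef, le_div_iff₀ (hjpp x)]
        nlinarith [norm_nonneg (Dk (k+2) (fun y => v r y) d'' ξ), hjpp ξ, hjpp x]
      have hkey := key v hv t ht k s hs d x Bc hBc0 hBbound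
      have htri : ‖Dk k (fun y => v s y) d x‖
          ≤ ‖Dk k (fun y => v 0 y) d x‖ + t * (N * Bc) := by
        have h3 := norm_sub_norm_le (Dk k (fun y => v s y) d x)
          (Dk k (fun y => v 0 y) d x)
        linarith
      have hreal : jb x ^ m * ‖Dk k (fun y => v s y) d x‖
          ≤ jb x ^ m * ‖Dk k (fun y => v 0 y) d x‖ + t * c₁ * Mk := by
        have h4 : jb x ^ m * (t * ((N:ℝ) * Bc)) = t * c₁ * Mk := by
          have hne : jb x ≠ 0 := ne_of_gt (jb_pos x)
          rw [hBcdef, hc₁def]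
          field_simp
        nlinarith [mul_le_mul_of_nonneg_left htri (hjp x)]
      calc ENNReal.ofReal (jb x ^ m) * ‖Dk k (fun y => v s y) d x‖₊
          = ENNReal.ofReal (jb x ^ m * ‖Dk k (fun y => v s y) d x‖) := by
            rw [ENNReal.ofReal_mul (hjp x), ofReal_norm, enorm_eq_nnnorm]
        _ ≤ ENNReal.ofReal (jb x ^ m * ‖Dk k (fun y => v 0 y) d x‖ + t * c₁ * Mk) :=
            ENNReal.ofReal_le_ofReal hreal
        _ ≤ ENNReal.ofReal (jb x ^ m * ‖Dk k (fun y => v 0 y) d x‖)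
            + ENNReal.ofReal (t * c₁ * Mk) := ENNReal.ofReal_add_le
        _ ≤ S + ENNReal.ofReal (t * c₁) * A (k+2) := by
            apply add_le_add
            · rw [ENNReal.ofReal_mul (hjp x), ofReal_norm, enorm_eq_nnnorm]
              exact hterm0
            · rw [ENNReal.ofReal_mul (mul_nonneg ht hc₁0)]
              apply mul_le_mul' le_rfl
              rw [hMkdef, ENNReal.ofReal_toReal hfin]
  -- ** Landau inequality **
  have hR2 : A (2*n+1) ≤ ENNReal.ofReal c₂ * (A (2*n) + R) := by
    apply hsupA
    intro d s hs x
    have hc₂pos : (0:ℝ≥0∞) < ENNReal.ofReal c₂ := ENNReal.ofReal_pos.2 (by linarith)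
    by_cases hfa : A (2*n) = ⊤
    · rw [hfa, top_add, ENNReal.mul_top (ne_of_gt hc₂pos)]
      exact le_top
    by_cases hfb : R = ⊤
    · rw [hfb, add_top, ENNReal.mul_top (ne_of_gt hc₂pos)]
      exact le_top
    set Ma := (A (2*n)).toReal with hMadef
    set Mb := R.toReal with hMbdef
    have hMa0 : 0 ≤ Ma := ENNReal.toReal_nonneg
    have hMb0 : 0 ≤ Mb := ENNReal.toReal_nonneg
    have h3m : (1:ℝ) ≤ 3^m := one_le_pow₀ (by norm_num)
    have h₀ : ∀ ξ : EuclideanSpace ℝ (Fin N), dist ξ x ≤ 1 →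
        ‖Dk (2*n) (fun y => v s y) (Fin.tail d) ξ‖ ≤ 3^m * Ma / jb x ^ m := by
      intro ξ hξ
      have h1 := hext (2*n) hfa (Fin.tail d) s hs ξ
      rw [← hMadef] at h1
      have hjb : jb x ^ m ≤ 3^m * jb ξ ^ m := by
        have h3 := jb_pow_le_of_dist x ξ 1 (by norm_num) (by rw [dist_comm]; exact hξ) m
        norm_num at h3
        exact h3
      rw [le_div_iff₀ (hjpp x)]
      nlinarith [norm_nonneg (Dk (2*n) (fun y => v s y) (Fin.tail d) ξ), hjpp ξ, hjpp x]
    have h₂ : ∀ (d'' : Fin (2*n+2) → Fin N) (ξ : EuclideanSpace ℝ (Fin N)), dist ξ x ≤ 1 →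
        ‖Dk (2*n+2) (fun y => v s y) d'' ξ‖ ≤ 3^m * Mb / jb x ^ m := by
      intro d'' ξ hξ
      have h1 := hext (2*n+2) hfb d'' s hs ξ
      rw [← hRdef, ← hMbdef] at h1
      have hjb : jb x ^ m ≤ 3^m * jb ξ ^ m := by
        have h3 := jb_pow_le_of_dist x ξ 1 (by norm_num) (by rw [dist_comm]; exact hξ) m
        norm_num at h3
        exact h3
      rw [le_div_iff₀ (hjpp x)]
      nlinarith [norm_nonneg (Dk (2*n+2) (fun y => v s y) d'' ξ), hjpp ξ, hjpp x]
    have hl := landau ((v s).smooth ⊤) (2*n) d x (3^m * Ma / jb x ^ m)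
      (3^m * Mb / jb x ^ m) h₀ h₂
    have hreal : jb x ^ m * ‖Dk (2*n+1) (fun y => v s y) d x‖ ≤ c₂ * (Ma + Mb) := by
      have hne : jb x ≠ 0 := ne_of_gt (jb_pos x)
      have h5 : jb x ^ m * (2 * (3^m * Ma / jb x ^ m) + 3^m * Mb / jb x ^ m)
          = 3^m * (2*Ma + Mb) := by
        field_simp
      have h6 := mul_le_mul_of_nonneg_left hl (hjp x)
      rw [h5] at h6
      rw [hc₂def]
      calc jb x ^ m * ‖Dk (2*n+1) (fun y => v s y) d x‖ ≤ 3^m * (2*Ma + Mb) := h6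
        _ ≤ 3^(m+1) * (Ma + Mb) := by
            rw [pow_succ]
            nlinarith
    calc ENNReal.ofReal (jb x ^ m) * ‖Dk (2*n+1) (fun y => v s y) d x‖₊
        = ENNReal.ofReal (jb x ^ m * ‖Dk (2*n+1) (fun y => v s y) d x‖) := by
          rw [ENNReal.ofReal_mul (hjp x), ofReal_norm, enorm_eq_nnnorm]
      _ ≤ ENNReal.ofReal (c₂ * (Ma + Mb)) := ENNReal.ofReal_le_ofReal hreal
      _ = ENNReal.ofReal c₂ * (ENNReal.ofReal Ma + ENNReal.ofReal Mb) := by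
          rw [ENNReal.ofReal_mul hc₂0, ENNReal.ofReal_add hMa0 hMb0]
      _ = ENNReal.ofReal c₂ * (A (2*n) + R) := by
          rw [hMadef, hMbdef, ENNReal.ofReal_toReal hfa, ENNReal.ofReal_toReal hfb]
  -- ** real arithmetic facts **
  have hone_t : (1:ℝ) ≤ 1 + t := by linarith
  have hlin : 1 + t*c₁ ≤ c₄*(1+t) := by nlinarith [mul_le_mul_of_nonneg_left hc₁c₄ ht]
  have hlin2 : t*c₁ ≤ c₄*(1+t) := by nlinarith [mul_le_mul_of_nonneg_left hc₁c₄ ht]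
  have hsq1 : 1 + c₁*c₂ ≤ c₄ := by nlinarith
  have hsq2 : c₁^2*c₂ ≤ c₄^2 := by nlinarith
  -- ** base case for k = 2n **
  have base2n : ∀ i : ℕ, A (2*n) ≤ ENNReal.ofReal (c₄^(i+1) * (1+t)^i) * S
      + ENNReal.ofReal (c₄^(i+1) * (t * (1+t)^i)) * R := by
    intro i
    have hp1 : 1 ≤ c₄^(i+1) := one_le_pow₀ hc₄1
    have hp2 : 1 ≤ (1+t)^i := one_le_pow₀ hone_t
    have h1 : A (2*n) ≤ ENNReal.ofReal 1 * S + ENNReal.ofReal (t*c₁) * R := by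
      rw [ENNReal.ofReal_one, one_mul]
      exact hR1 (2*n) le_rfl
    apply mono_bound h1
    · nlinarith [mul_le_mul hp1 hp2 zero_le_one (le_trans zero_le_one hp1)]
    · have q1 : c₁ ≤ c₄^(i+1) := le_trans hc₁c₄ (le_self_pow₀ hc₄1 (Nat.succ_ne_zero i))
      have q2 : c₁ ≤ c₄^(i+1) * (1+t)^i := by nlinarith [mul_le_mul q1 hp2 zero_le_one (le_trans (le_trans zero_le_one hc₁1) q1)]
      have q3 : t*c₁ ≤ t*(c₄^(i+1) * (1+t)^i) := mul_le_mul_of_nonneg_left q2 ht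
      nlinarith
  -- ** the downward induction **
  have hclaim : ∀ i k : ℕ, k ≤ 2*n → 2*n ≤ k + 2*i →
      A k ≤ ENNReal.ofReal (c₄^(i+1) * (1+t)^i) * S
          + ENNReal.ofReal (c₄^(i+1) * (t * (1+t)^i)) * R := by
    intro i
    induction i with
    | zero =>
      intro k hk1 hk2
      have hk : k = 2*n := by omega
      rw [hk]
      exact base2n 0
    | succ i ih =>
      intro k hk1 hk2
      have hp1 : 1 ≤ c₄^(i+1) := one_le_pow₀ hc₄1
      have hp2 : 1 ≤ (1+t)^i := one_le_pow₀ hone_t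
      have hp1' : 1 ≤ c₄^(i+2) := one_le_pow₀ hc₄1
      have hp2' : 1 ≤ (1+t)^(i+1) := one_le_pow₀ hone_t
      have hpow4 : c₄^(i+2) = c₄^(i+1) * c₄ := pow_succ c₄ (i+1)
      have hpowt : (1+t)^(i+1) = (1+t)^i * (1+t) := pow_succ (1+t) i
      by_cases hcase1 : k = 2*n
      · rw [hcase1]
        exact base2n (i+1)
      by_cases hcase2 : k + 1 = 2*n
      · have hZ : A (2*n) + R ≤ ENNReal.ofReal 1 * S + ENNReal.ofReal (t*c₁+1) * R := by
          calc A (2*n) + R ≤ (S + ENNReal.ofReal (t*c₁) * R) + R :=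
              add_le_add (hR1 (2*n) le_rfl) le_rfl
            _ = ENNReal.ofReal 1 * S + ENNReal.ofReal (t*c₁+1) * R := by
                rw [ENNReal.ofReal_one, one_mul,
                  ENNReal.ofReal_add (mul_nonneg ht hc₁0) zero_le_one, ENNReal.ofReal_one,
                  add_mul, one_mul, add_assoc]
        have hA2n1 : A (2*n+1) ≤ ENNReal.ofReal (c₂*1) * S + ENNReal.ofReal (c₂*(t*c₁+1)) * R :=
          mul_step hc₂0 zero_le_one (by nlinarith [mul_nonneg ht hc₁0]) hR2 hZ
        have hAk : A k ≤ S + ENNReal.ofReal (t*c₁) * A (k+2) := hR1 k hk1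
        have hk2eq : k + 2 = 2*n+1 := by omega
        rw [hk2eq] at hAk
        have hstep := step_bound (mul_nonneg ht hc₁0) (by nlinarith [hc₂0])
          (mul_nonneg hc₂0 (by nlinarith [mul_nonneg ht hc₁0])) hAk hA2n1
        apply mono_bound hstep
        · -- 1 + (t*c₁)*(c₂*1) ≤ c₄^(i+2)*(1+t)^(i+1)
          have hx1 : 1 + t*(c₁*c₂) ≤ (1+c₁*c₂)*(1+t) := by nlinarith
          have hx2 : (1+c₁*c₂)*(1+t) ≤ c₄*(1+t) := by nlinarith
          have hx3 : c₄*(1+t) ≤ c₄^(i+2)*(1+t)^(i+1) := by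
            apply mul_le_mul (le_self_pow₀ hc₄1 (by omega)) (le_self_pow₀ hone_t (by omega))
              (by linarith) (by positivity)
          nlinarith
        · -- (t*c₁)*(c₂*(t*c₁+1)) ≤ c₄^(i+2)*(t*(1+t)^(i+1))
          have hsq3 : c₁*c₂ ≤ c₄^2 := by nlinarith
          have e1 : (t*t)*(c₁^2*c₂) ≤ (t*t)*c₄^2 :=
            mul_le_mul_of_nonneg_left hsq2 (mul_nonneg ht ht)
          have e2 : t*(c₁*c₂) ≤ t*c₄^2 := mul_le_mul_of_nonneg_left hsq3 ht
          have hy1 : (t*c₁)*(c₂*(t*c₁+1)) ≤ (t*(1+t))*c₄^2 := by nlinarith [e1, e2]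
          have hy2 : (t*(1+t))*c₄^2 ≤ (t*(1+t)^(i+1))*c₄^(i+2) := by
            apply mul_le_mul
            · apply mul_le_mul_of_nonneg_left (le_self_pow₀ hone_t (by omega)) ht
            · exact pow_le_pow_right₀ hc₄1 (by omega)
            · positivity
            · positivity
          nlinarith
      · have hk3 : k + 2 ≤ 2*n := by omega
        have hIH := ih (k+2) hk3 (by omega)
        have hAk := hR1 k hk1
        have hstep := step_bound (mul_nonneg ht hc₁0) (by positivity) (by positivity) hAk hIH
        apply mono_bound hstep
        · -- 1 + (t*c₁)*(c₄^(i+1)*(1+t)^i) ≤ c₄^(i+2)*(1+t)^(i+1)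
          have hpr : 1 ≤ c₄^(i+1)*(1+t)^i := by nlinarith
          have h5 : (c₄^(i+1)*(1+t)^i)*(1+t*c₁) ≤ (c₄^(i+1)*(1+t)^i)*(c₄*(1+t)) :=
            mul_le_mul_of_nonneg_left hlin (by positivity)
          have h6 : (c₄^(i+1)*(1+t)^i)*(c₄*(1+t)) = c₄^(i+2)*(1+t)^(i+1) := by
            rw [hpow4, hpowt]; ring
          nlinarith [mul_nonneg (mul_nonneg (pow_nonneg hc₄0 (i+1)) (pow_nonneg (by linarith : (0:ℝ) ≤ 1+t) i)) (mul_nonneg ht hc₁0)]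
        · -- (t*c₁)*(c₄^(i+1)*(t*(1+t)^i)) ≤ c₄^(i+2)*(t*(1+t)^(i+1))
          have h5 : (t*(c₄^(i+1)*(1+t)^i))*(t*c₁) ≤ (t*(c₄^(i+1)*(1+t)^i))*(c₄*(1+t)) :=
            mul_le_mul_of_nonneg_left hlin2 (by positivity)
          have h6 : (t*(c₄^(i+1)*(1+t)^i))*(c₄*(1+t)) = c₄^(i+2)*(t*(1+t)^(i+1)) := by
            rw [hpow4, hpowt]; ring
          nlinarith
  -- ** summation **
  have hsum : ∑ k ∈ Finset.range (2*n+1), A k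
      ≤ ∑ _k ∈ Finset.range (2*n+1), (ENNReal.ofReal (c₄^(n+1) * (1+t)^n) * S
          + ENNReal.ofReal (c₄^(n+1) * (t * (1+t)^n)) * R) := by
    apply Finset.sum_le_sum
    intro k hk
    have hk' : k < 2*n+1 := Finset.mem_range.1 hk
    exact hclaim n k (by omega) (by omega)
  rw [Finset.sum_const, Finset.card_range] at hsum
  have hconv : (2*n+1) • (ENNReal.ofReal (c₄^(n+1) * (1+t)^n) * S
        + ENNReal.ofReal (c₄^(n+1) * (t * (1+t)^n)) * R)
      = ENNReal.ofReal ((2*(n:ℝ)+1) * c₄^(n+1) * (1 + t)^n) * S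
        + ENNReal.ofReal ((2*(n:ℝ)+1) * c₄^(n+1) * t * (1 + t)^n) * R := by
    rw [nsmul_eq_mul, mul_add, ← mul_assoc, ← mul_assoc]
    congr 2
    · rw [← ENNReal.ofReal_natCast (2*n+1), ← ENNReal.ofReal_mul (by positivity)]
      congr 1
      push_cast
      ring
    · rw [← ENNReal.ofReal_natCast (2*n+1), ← ENNReal.ofReal_mul (by positivity)]
      congr 1
      push_cast
      ring
  rw [hconv] at hsum
  -- now dominate the actual right-hand side (the + is inside the inner sup)
  haveI hNE : Nonempty (Fin N) := ⟨⟨0, hN⟩⟩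
  set T1 : ℝ≥0∞ := ENNReal.ofReal ((2*(n:ℝ)+1) * c₄^(n+1) * (1 + t)^n) with hT1def
  set T2 : ℝ≥0∞ := ENNReal.ofReal ((2*(n:ℝ)+1) * c₄^(n+1) * t * (1 + t)^n) with hT2def
  have hT1 : 1 ≤ T1 := by
    rw [hT1def, ← ENNReal.ofReal_one]
    apply ENNReal.ofReal_le_ofReal
    have q1 : 1 ≤ (1+t)^n := one_le_pow₀ hone_t
    have q2 : 1 ≤ c₄^(n+1) := one_le_pow₀ hc₄1
    nlinarith [mul_le_mul q2 q1 zero_le_one (le_trans zero_le_one q2)]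
  have hkeq : ∀ k : ℕ,
      (⨆ d : Fin k → Fin N, ⨆ x, (ENNReal.ofReal (jb x ^ m) * ‖Dk k (fun y => v 0 y) d x‖₊
        + T2 * R)) = Bd k + T2 * R := by
    intro k
    have inner : ∀ d : Fin k → Fin N,
        (⨆ x, (ENNReal.ofReal (jb x ^ m) * ‖Dk k (fun y => v 0 y) d x‖₊ + T2 * R))
          = (⨆ x, ENNReal.ofReal (jb x ^ m) * ‖Dk k (fun y => v 0 y) d x‖₊) + T2 * R :=
      fun d => (ENNReal.iSup_add _).symm
    calc (⨆ d : Fin k → Fin N, ⨆ x,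
          (ENNReal.ofReal (jb x ^ m) * ‖Dk k (fun y => v 0 y) d x‖₊ + T2 * R))
        = ⨆ d : Fin k → Fin N,
            ((⨆ x, ENNReal.ofReal (jb x ^ m) * ‖Dk k (fun y => v 0 y) d x‖₊) + T2 * R) :=
          iSup_congr inner
      _ = (⨆ d : Fin k → Fin N, ⨆ x,
            ENNReal.ofReal (jb x ^ m) * ‖Dk k (fun y => v 0 y) d x‖₊) + T2 * R :=
          (ENNReal.iSup_add _).symm
      _ = Bd k + T2 * R := by rw [hBdef]
  calc ∑ k ∈ Finset.range (2*n+1), A k ≤ T1 * S + T2 * R := hsum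
    _ ≤ T1 * S + T1 * (T2 * R) := by
        apply add_le_add le_rfl
        calc T2 * R = 1 * (T2 * R) := (one_mul _).symm
          _ ≤ T1 * (T2 * R) := mul_le_mul' hT1 le_rfl
    _ = T1 * (S + T2 * R) := by rw [mul_add]
    _ ≤ T1 * (S + (2*n+1) • (T2 * R)) := by
        apply mul_le_mul' le_rfl
        apply add_le_add le_rfl
        calc T2 * R = 1 * (T2 * R) := (one_mul _).symm
          _ ≤ ((2*n+1 : ℕ) : ℝ≥0∞) * (T2 * R) := by
              apply mul_le_mul' _ le_rfl
              exact_mod_cast Nat.one_le_iff_ne_zero.2 (by omega)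
          _ = (2*n+1) • (T2 * R) := (nsmul_eq_mul _ _).symm
    _ = T1 * (∑ k ∈ Finset.range (2*n+1), (Bd k + T2 * R)) := by
        rw [Finset.sum_add_distrib, Finset.sum_const, Finset.card_range]
    _ = T1 * (∑ k ∈ Finset.range (2*n+1), ⨆ d : Fin k → Fin N, ⨆ x,
          (ENNReal.ofReal (jb x ^ m) * ‖Dk k (fun y => v 0 y) d x‖₊ + T2 * R)) := by
        congr 1
        exact (Finset.sum_congr rfl (fun k _ => hkeq k)).symm
    _ = ENNReal.ofReal ((2*(n:ℝ)+1) * c₄^(n+1) * (1 + t) ^ n) *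
          ∑ k ∈ Finset.range (2 * n + 1), ⨆ d : Fin k → Fin N, ⨆ x,
            ENNReal.ofReal (jb x ^ m) * ‖Dk k (fun y => v 0 y) d x‖₊
          + ENNReal.ofReal ((2*(n:ℝ)+1) * c₄^(n+1) * t * (1 + t) ^ n) *
              ⨆ d : Fin (2 * n + 2) → Fin N, ⨆ s ∈ Set.Icc (0 : ℝ) t, ⨆ x,
                ENNReal.ofReal (jb x ^ m) * ‖Dk (2 * n + 2) (fun y => v s y) d x‖₊ := by
        rw [hT1def, hT2def, hRdef, hAdef]
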